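/- arXiv:cs/0508044 — 2 statements merged into one kernel-verified Lean document; each statement's English description precedes it below -/
import Mathlib

section
/- Let M be an r×r integer matrix whose rows are partitioned into a top block of k rows and a bottom block of r−k rows, such that the bottom block (viewed as a (r−k)×r matrix) is a submatrix of a totally unimodular matrix, each of the top k rows has at most w nonzero entries, and every entry of the top k rows has absolute value at most a. Then |det(M)| ≤ (a·w)^k. -/
/-- An integer matrix is totally unimodular if every square submatrix has
determinant `0`, `1`, or `-1`. -/
def IsTotUnimod {R C : Type} (A : Matrix R C ℤ) : Prop :=
  ∀ (k : ℕ) (f : Fin k → R) (g : Fin k → C),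
    (A.submatrix f g).det = 0 ∨ (A.submatrix f g).det = 1 ∨ (A.submatrix f g).det = -1

/-- Base case: if every top row is a standard unit vector and the bottom block is TUM,
then the determinant has absolute value at most 1. -/
lemma det_abs_le_one_of_unit_rows {k l : ℕ}
    (M : Matrix (Fin k ⊕ Fin l) (Fin k ⊕ Fin l) ℤ)
    (hbot : IsTotUnimod (Matrix.of fun (i : Fin l) (j : Fin k ⊕ Fin l) => M (Sum.inr i) j))
    (c : Fin k → Fin k ⊕ Fin l)
    (hunit : ∀ i, (fun j => M (Sum.inl i) j) = Pi.single (c i) 1) :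
    |M.det| ≤ 1 := by
  classical
  by_cases hc : Function.Injective c
  · have hcard : Fintype.card (Fin l)
        = Fintype.card ((Set.range c)ᶜ : Set (Fin k ⊕ Fin l)) := by
      rw [Fintype.card_compl_set, Set.card_range_of_injective hc]
      simp [Fintype.card_sum]
    let g := Fintype.equivOfCardEq hcard
    let e : (Fin k ⊕ Fin l) ≃ (Fin k ⊕ Fin l) :=
      (Equiv.sumCongr (Equiv.ofInjective c hc) g).trans
        (Equiv.Set.sumCompl (Set.range c))
    have he : ∀ i, e (Sum.inl i) = c i := fun i => by
      simp [e, Equiv.Set.sumCompl_apply_inl, Equiv.ofInjective]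
    have heD : ∀ j', e (Sum.inr j') ∈ (Set.range c)ᶜ := fun j' => by
      simp only [e, Equiv.trans_apply, Equiv.sumCongr_apply, Sum.map_inr]
      exact (Equiv.Set.sumCompl_apply_inr (Set.range c) (g j')) ▸ (g j').2
    have hblocks : M.submatrix id e
        = Matrix.fromBlocks 1 0
            (Matrix.of fun (j : Fin l) (i : Fin k) => M (Sum.inr j) (c i))
            (Matrix.of fun (j j' : Fin l) => M (Sum.inr j) (e (Sum.inr j'))) := by
      ext i j
      cases i with
      | inl i =>
        cases j with
        | inl j =>
          have h2 := congrFun (hunit i) (e (Sum.inl j))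
          rw [he j] at h2
          simp only [Matrix.submatrix_apply, id_eq, he, Matrix.fromBlocks_apply₁₁, h2]
          rw [Pi.single_apply, Matrix.one_apply]
          simp [hc.eq_iff, eq_comm]
        | inr j =>
          have := congrFun (hunit i) (e (Sum.inr j))
          simp only [Matrix.submatrix_apply, id_eq, this,
            Matrix.fromBlocks_apply₁₂, Matrix.zero_apply]
          rw [Pi.single_apply, if_neg]
          intro h
          exact (heD j) ⟨i, h.symm⟩
      | inr i =>
        cases j with
        | inl j => simp [he]
        | inr j => simp
    have hdet := Matrix.det_permute' e M
    have habsdet : |M.det| = |(M.submatrix id e).det| := by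
      rw [hdet, abs_mul]
      rcases Int.units_eq_one_or (Equiv.Perm.sign e) with h | h <;> simp [h]
    rw [habsdet, hblocks, Matrix.det_fromBlocks_zero₁₂, Matrix.det_one, one_mul]
    have hD := hbot l id (fun j' => e (Sum.inr j'))
    have : ((Matrix.of fun (i : Fin l) (j : Fin k ⊕ Fin l) => M (Sum.inr i) j).submatrix
        id (fun j' => e (Sum.inr j')))
        = Matrix.of fun (j j' : Fin l) => M (Sum.inr j) (e (Sum.inr j')) := rfl
    rw [this] at hD
    rcases hD with h | h | h <;> simp [h]
  · rw [Function.not_injective_iff] at hc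
    obtain ⟨i, i', heq, hne⟩ := hc
    have hrow : M (Sum.inl i) = M (Sum.inl i') := by
      have h1 : (fun j => M (Sum.inl i) j) = (fun j => M (Sum.inl i') j) := by
        rw [hunit i, hunit i', heq]
      exact h1
    rw [Matrix.det_zero_of_row_eq (by simp [hne]) hrow]
    simp

lemma det_abs_le_aux {k l : ℕ} (a : ℝ) (w : ℕ) (S : Finset (Fin k)) :
    ∀ M : Matrix (Fin k ⊕ Fin l) (Fin k ⊕ Fin l) ℤ,
      IsTotUnimod (Matrix.of fun (i : Fin l) (j : Fin k ⊕ Fin l) => M (Sum.inr i) j) →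
      (∀ i ∈ S, (Finset.univ.filter fun j : Fin k ⊕ Fin l => M (Sum.inl i) j ≠ 0).card ≤ w) →
      (∀ i ∈ S, ∀ j, |((M (Sum.inl i) j : ℤ) : ℝ)| ≤ a) →
      (∀ i ∉ S, ∃ c, (fun j => M (Sum.inl i) j) = Pi.single c 1) →
      |((M.det : ℤ) : ℝ)| ≤ (a * w) ^ S.card := by
  classical
  induction S using Finset.strongInduction with
  | _ S IH =>
    intro M hbot hw ha hunit
    rcases S.eq_empty_or_nonempty with rfl | ⟨i₀, hi₀⟩
    · simp only [Finset.card_empty, pow_zero]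
      have h1 : |M.det| ≤ 1 := by
        refine det_abs_le_one_of_unit_rows M hbot
          (fun i => (hunit i (by simp)).choose) (fun i => (hunit i (by simp)).choose_spec)
      rw [← Int.cast_abs]
      exact_mod_cast h1
    · have hm : S.card = (S.erase i₀).card + 1 := by
        rw [Finset.card_erase_of_mem hi₀]
        exact (Nat.succ_pred_eq_of_pos (Finset.card_pos.mpr ⟨i₀, hi₀⟩)).symm
      set N : (Fin k ⊕ Fin l) → Matrix (Fin k ⊕ Fin l) (Fin k ⊕ Fin l) ℤ :=
        fun j => M.updateRow (Sum.inl i₀) (Pi.single j 1) with hN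
      have hMdet : M.det = ∑ j, M (Sum.inl i₀) j * (N j).det := by
        rw [Matrix.det_eq_sum_mul_adjugate_row M (Sum.inl i₀)]
        simp_rw [Matrix.adjugate_apply]
        rfl
      have hNle : ∀ j, |(((N j).det : ℤ) : ℝ)| ≤ (a * w) ^ (S.erase i₀).card := by
        intro j
        refine IH (S.erase i₀) (Finset.erase_ssubset hi₀) (N j) ?_ ?_ ?_ ?_
        · have : (Matrix.of fun (i : Fin l) (j' : Fin k ⊕ Fin l) => (N j) (Sum.inr i) j')
              = (Matrix.of fun (i : Fin l) (j' : Fin k ⊕ Fin l) => M (Sum.inr i) j') := by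
            ext i j'
            simp only [Matrix.of_apply, hN]
            rw [Matrix.updateRow_ne]
            simp
          rw [this]; exact hbot
        · intro i hi
          have hne : (Sum.inl i : Fin k ⊕ Fin l) ≠ Sum.inl i₀ := by
            simp [Finset.ne_of_mem_erase hi]
          simp only [hN, Matrix.updateRow_ne hne]
          exact hw i (Finset.mem_of_mem_erase hi)
        · intro i hi j'
          have hne : (Sum.inl i : Fin k ⊕ Fin l) ≠ Sum.inl i₀ := by
            simp [Finset.ne_of_mem_erase hi]
          simp only [hN, Matrix.updateRow_ne hne]
          exact ha i (Finset.mem_of_mem_erase hi) j'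
        · intro i hi
          by_cases hii : i = i₀
          · subst hii
            exact ⟨j, by funext j'; simp [hN]⟩
          · have : i ∉ S := fun h => hi (Finset.mem_erase.mpr ⟨hii, h⟩)
            obtain ⟨c, hc⟩ := hunit i this
            refine ⟨c, ?_⟩
            have hne : (Sum.inl i : Fin k ⊕ Fin l) ≠ Sum.inl i₀ := by simp [hii]
            funext j'
            simp only [hN, Matrix.updateRow_ne hne]
            exact congrFun hc j'
      have ha0 : 0 ≤ a := le_trans (abs_nonneg _) (ha i₀ hi₀ (Sum.inl i₀))
      have hpow : (0:ℝ) ≤ (a * w) ^ (S.erase i₀).card :=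
        pow_nonneg (mul_nonneg ha0 (Nat.cast_nonneg w)) _
      set F := Finset.univ.filter fun j : Fin k ⊕ Fin l => M (Sum.inl i₀) j ≠ 0 with hF
      calc |((M.det : ℤ) : ℝ)|
          = |∑ j, ((M (Sum.inl i₀) j : ℤ) : ℝ) * (((N j).det : ℤ) : ℝ)| := by
            rw [hMdet]; push_cast; ring_nf
        _ ≤ ∑ j, |((M (Sum.inl i₀) j : ℤ) : ℝ) * (((N j).det : ℤ) : ℝ)| :=
            Finset.abs_sum_le_sum_abs _ _
        _ = ∑ j ∈ F, |((M (Sum.inl i₀) j : ℤ) : ℝ) * (((N j).det : ℤ) : ℝ)| := by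
            refine (Finset.sum_subset (Finset.filter_subset _ _) ?_).symm
            intro x _ hx
            simp only [hF, Finset.mem_filter, Finset.mem_univ, true_and, not_not] at hx
            simp [hx]
        _ ≤ ∑ _j ∈ F, a * (a * w) ^ (S.erase i₀).card := by
            refine Finset.sum_le_sum fun j _ => ?_
            rw [abs_mul]
            exact mul_le_mul (ha i₀ hi₀ j) (hNle j) (abs_nonneg _) ha0
        _ = (F.card : ℝ) * (a * (a * w) ^ (S.erase i₀).card) := by
            rw [Finset.sum_const, nsmul_eq_mul]
        _ ≤ (w : ℝ) * (a * (a * w) ^ (S.erase i₀).card) := by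
            refine mul_le_mul_of_nonneg_right ?_ (mul_nonneg ha0 hpow)
            exact_mod_cast hw i₀ hi₀
        _ = (a * w) ^ S.card := by
            rw [hm, pow_succ]; ring

/-- Let `M` be an `r × r` integer matrix (`r = k + l`) whose bottom `l` rows form a
totally unimodular matrix (equivalently, a submatrix of a totally unimodular matrix),
whose top `k` rows each have at most `w` nonzero entries, all of absolute value at most
`a`. Then `|det M| ≤ (a * w) ^ k`. -/
theorem det_le_of_top_sparse_bottom_TUM {k l : ℕ}
    (M : Matrix (Fin k ⊕ Fin l) (Fin k ⊕ Fin l) ℤ) (a : ℝ) (w : ℕ)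
    (hbot : IsTotUnimod (Matrix.of fun (i : Fin l) (j : Fin k ⊕ Fin l) => M (Sum.inr i) j))
    (hw : ∀ i : Fin k,
      (Finset.univ.filter fun j : Fin k ⊕ Fin l => M (Sum.inl i) j ≠ 0).card ≤ w)
    (ha : ∀ (i : Fin k) (j : Fin k ⊕ Fin l), |((M (Sum.inl i) j : ℤ) : ℝ)| ≤ a) :
    |((M.det : ℤ) : ℝ)| ≤ (a * w) ^ k := by
  have := det_abs_le_aux (l := l) a w Finset.univ M hbot
    (fun i _ => hw i) (fun i _ j => ha i j)
    (fun i hi => absurd (Finset.mem_univ i) hi)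
  simpa using this
end

section
/- Let G be a weighted directed graph on n+1 vertices in which every edge weight is an integer of absolute value at most B+1, and suppose there exists an assignment of integers to the vertices such that for every edge (u, v) of weight c, the value at u is at least the value at v plus c (equivalently, G has no positive-weight cycle and a valid potential exists). Then there exists such an assignment in which the difference between the maximum and minimum assigned values is at most n·(B+1). -/


lemma chain_bound (b : ℤ) (hb : 0 ≤ b) :
    ∀ k : ℕ, ∀ S : Finset ℤ, ∀ hS : S.Nonempty, S.card ≤ k + 1 →
      (∀ t ∈ S, t < S.max' hS → ∃ s ∈ S, t < s ∧ s ≤ t + b) →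
      S.max' hS - S.min' hS ≤ (k : ℤ) * b := by
  intro k
  induction k with
  | zero =>
    intro S hS hcard _
    have h1 : S.card = 1 := le_antisymm hcard (Finset.card_pos.2 hS)
    obtain ⟨a, ha⟩ := Finset.card_eq_one.1 h1
    subst ha
    simp
  | succ k ih =>
    intro S hS hcard hchain
    by_cases hmm : S.max' hS ≤ S.min' hS
    · have : (0:ℤ) ≤ ((k:ℤ)+1) * b := by positivity
      push_cast
      linarith
    · push_neg at hmm
      obtain ⟨s, hsS, hs1, hs2⟩ := hchain _ (S.min'_mem hS) hmm
      set S' := S.erase (S.min' hS) with hS'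
      have hsS' : s ∈ S' := Finset.mem_erase.2 ⟨by linarith [hs1], hsS⟩
      have hS'ne : S'.Nonempty := ⟨s, hsS'⟩
      have hmaxmem : S.max' hS ∈ S' :=
        Finset.mem_erase.2 ⟨by linarith, S.max'_mem hS⟩
      have hmaxeq : S'.max' hS'ne = S.max' hS := by
        apply le_antisymm
        · exact Finset.max'_le _ _ _ fun y hy =>
            Finset.le_max' _ _ (Finset.mem_of_mem_erase hy)
        · exact Finset.le_max' _ _ hmaxmem
      have hmin'lb : S.min' hS < S'.min' hS'ne := by
        have := S'.min'_mem hS'ne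
        have h2 := Finset.mem_erase.1 this
        have := S.min'_le _ (Finset.mem_of_mem_erase (S'.min'_mem hS'ne))
        rcases lt_or_eq_of_le this with h | h
        · exact h
        · exact absurd h.symm h2.1
      have hmin'ub : S'.min' hS'ne ≤ S.min' hS + b := le_trans (Finset.min'_le _ _ hsS') hs2
      have hcard' : S'.card ≤ k + 1 := by
        have : S'.card = S.card - 1 := by rw [hS']; exact Finset.card_erase_of_mem (S.min'_mem hS)
        omega
      have hchain' : ∀ t ∈ S', t < S'.max' hS'ne → ∃ s ∈ S', t < s ∧ s ≤ t + b := by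
        intro t htS' htlt
        obtain ⟨s', hs'S, h1, h2⟩ := hchain t (Finset.mem_of_mem_erase htS') (hmaxeq ▸ htlt)
        have htmin : S.min' hS ≤ t := S.min'_le _ (Finset.mem_of_mem_erase htS')
        exact ⟨s', Finset.mem_erase.2 ⟨by linarith, hs'S⟩, h1, h2⟩
      have := ih S' hS'ne hcard' hchain'
      rw [hmaxeq] at this
      push_cast
      linarith

lemma shrink_spread (n B : ℕ) (E : Fin (n + 1) → Fin (n + 1) → Prop)
    (w : Fin (n + 1) → Fin (n + 1) → ℤ)
    (hw : ∀ u v, E u v → |w u v| ≤ (B : ℤ) + 1) :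
    ∀ k : ℕ, ∀ f : Fin (n + 1) → ℤ, (∀ u v, E u v → f v + w u v ≤ f u) →
      (Finset.univ.image f).max' (Finset.univ_nonempty.image f) -
        (Finset.univ.image f).min' (Finset.univ_nonempty.image f) ≤ (k : ℤ) →
      ∃ g : Fin (n + 1) → ℤ, (∀ u v, E u v → g v + w u v ≤ g u) ∧
        ∀ u v, g u - g v ≤ (n : ℤ) * ((B : ℤ) + 1) := by
  intro k
  induction k with
  | zero =>
    intro f hf hsp
    refine ⟨f, hf, fun u v => ?_⟩
    have h1 := Finset.le_max' _ (f u) (Finset.mem_image_of_mem f (Finset.mem_univ u))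
    have h2 := Finset.min'_le _ (f v) (Finset.mem_image_of_mem f (Finset.mem_univ v))
    have : (0:ℤ) ≤ (n : ℤ) * ((B:ℤ)+1) := by positivity
    push_cast at hsp
    linarith
  | succ k ih =>
    intro f hf hsp
    set S := Finset.univ.image f with hSdef
    have hS : S.Nonempty := Finset.univ_nonempty.image f
    by_cases hsmall : S.max' hS - S.min' hS ≤ (n : ℤ) * ((B:ℤ)+1)
    · refine ⟨f, hf, fun u v => ?_⟩
      have h1 := Finset.le_max' S (f u) (Finset.mem_image_of_mem f (Finset.mem_univ u))
      have h2 := Finset.min'_le S (f v) (Finset.mem_image_of_mem f (Finset.mem_univ v))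
      linarith
    · -- there is a gap: find t via contrapositive of chain_bound
      have hcard : S.card ≤ n + 1 := le_trans (Finset.card_image_le) (by simp)
      have hnochain : ¬ (∀ t ∈ S, t < S.max' hS → ∃ s ∈ S, t < s ∧ s ≤ t + ((B:ℤ)+1)) := by
        intro hch
        have := chain_bound ((B:ℤ)+1) (by positivity) n S hS hcard hch
        exact hsmall this
      push_neg at hnochain
      obtain ⟨t, htS, htlt, hgap⟩ := hnochain
      -- every value is ≤ t or ≥ t + B + 2
      have hdich : ∀ x : Fin (n+1), f x ≤ t ∨ t + (B:ℤ) + 2 ≤ f x := by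
        intro x
        by_cases hx : f x ≤ t
        · exact Or.inl hx
        · push_neg at hx
          have := hgap (f x) (Finset.mem_image_of_mem f (Finset.mem_univ x)) hx
          right; linarith
      set g : Fin (n+1) → ℤ := fun x => if t < f x then f x - 1 else f x with hgdef
      have hg : ∀ u v, E u v → g v + w u v ≤ g u := by
        intro u v huv
        have hfe := hf u v huv
        have hwb := abs_le.1 (hw u v huv)
        simp only [hgdef]
        rcases hdich u with hu | hu <;> rcases hdich v with hv | hv
        · rw [if_neg (not_lt.2 hu), if_neg (not_lt.2 hv)]; linarith
        · -- f u ≤ t, f v ≥ t + B + 2 : impossible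
          exfalso; linarith [hwb.1]
        · rw [if_pos (by linarith : t < f u), if_neg (not_lt.2 hv)]
          linarith [hwb.2]
        · rw [if_pos (by linarith : t < f u), if_pos (by linarith : t < f v)]
          linarith
      have hgub : ∀ x, g x ≤ S.max' hS - 1 := by
        intro x
        have hmem := Finset.le_max' S (f x) (Finset.mem_image_of_mem f (Finset.mem_univ x))
        simp only [hgdef]
        split
        · linarith
        · next h => push_neg at h; linarith
      have hglb : ∀ x, S.min' hS ≤ g x := by
        intro x
        have hmem := Finset.min'_le S (f x) (Finset.mem_image_of_mem f (Finset.mem_univ x))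
        have htmin := Finset.min'_le S t htS
        simp only [hgdef]
        split
        · next h =>
          rcases hdich x with h' | h'
          · linarith
          · linarith
        · exact hmem
      apply ih g hg
      have hub : (Finset.univ.image g).max' (Finset.univ_nonempty.image g) ≤ S.max' hS - 1 := by
        apply Finset.max'_le
        intro y hy
        obtain ⟨x, _, rfl⟩ := Finset.mem_image.1 hy
        exact hgub x
      have hlb : S.min' hS ≤ (Finset.univ.image g).min' (Finset.univ_nonempty.image g) := by
        apply Finset.le_min'
        intro y hy
        obtain ⟨x, _, rfl⟩ := Finset.mem_image.1 hy
        exact hglb x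
      have hsp' : S.max' hS - S.min' hS ≤ (k:ℤ) + 1 := by exact_mod_cast hsp
      linarith

/-- Difference-logic solution bound: if a weighted directed graph on `n + 1` vertices,
with integer edge weights of absolute value at most `B + 1`, admits a valid potential
(`f u ≥ f v + c` for every edge `(u, v)` of weight `c`), then it admits one whose
spread (difference between any two values) is at most `n * (B + 1)`. -/
theorem difference_logic_solution_bound (n B : ℕ)
    (E : Fin (n + 1) → Fin (n + 1) → Prop) (w : Fin (n + 1) → Fin (n + 1) → ℤ)
    (hw : ∀ u v, E u v → |w u v| ≤ (B : ℤ) + 1)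
    (hsat : ∃ f : Fin (n + 1) → ℤ, ∀ u v, E u v → f v + w u v ≤ f u) :
    ∃ f : Fin (n + 1) → ℤ, (∀ u v, E u v → f v + w u v ≤ f u) ∧
      ∀ u v, f u - f v ≤ (n : ℤ) * ((B : ℤ) + 1) := by
  obtain ⟨f, hf⟩ := hsat
  exact shrink_spread n B E w hw
    ((Finset.univ.image f).max' (Finset.univ_nonempty.image f) -
      (Finset.univ.image f).min' (Finset.univ_nonempty.image f)).toNat f hf
    (Int.self_le_toNat _)
end
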